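/- arXiv:2308.01152 — 2 statements merged into one kernel-verified Lean document; each statement's English description precedes it below -/
import Mathlib

section
/- As Y → ∞, ∑_{n ≤ Y, n even} g(n) = (½·∏_{p prime, p > 2} (1 + 1/(p(p − 2))) + o(1))·Y, where the infinite product over odd primes converges. -/
open Filter Finset

/-- The multiplicative function `g(m) = ∏_{p ∣ m, p > 2 prime} (p-1)/(p-2)`. -/
noncomputable def gFun (m : ℕ) : ℝ :=
  ∏ p ∈ m.primeFactors.filter (fun p => 2 < p), ((p : ℝ) - 1) / ((p : ℝ) - 2)

noncomputable def hFun (d : ℕ) : ℝ :=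
  if Squarefree d ∧ Odd d then ∏ p ∈ d.primeFactors, (1 / ((p : ℝ) - 2)) else 0

lemma hFun_zero : hFun 0 = 0 := by simp [hFun, not_squarefree_zero]

lemma hFun_one : hFun 1 = 1 := by simp [hFun, squarefree_one, odd_one]

lemma odd_prime_three_le {p d : ℕ} (hp : p ∈ d.primeFactors) (hd : Odd d) : 3 ≤ p := by
  have hp' := Nat.prime_of_mem_primeFactors hp
  have hpd : p ∣ d := Nat.dvd_of_mem_primeFactors hp
  have h2 : p ≠ 2 := by
    rintro rfl
    rw [Nat.odd_iff] at hd
    obtain ⟨k, rfl⟩ := hpd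
    omega
  have := hp'.two_le
  omega

lemma hFun_nonneg (d : ℕ) : 0 ≤ hFun d := by
  unfold hFun
  split_ifs with h
  · refine Finset.prod_nonneg fun p hp => ?_
    have h3 : (3:ℝ) ≤ (p:ℝ) := by exact_mod_cast odd_prime_three_le hp h.2
    have : (0:ℝ) < (p:ℝ) - 2 := by linarith
    positivity
  · exact le_refl 0

lemma hFun_mul {m n : ℕ} (h : m.Coprime n) : hFun (m * n) = hFun m * hFun n := by
  rcases eq_or_ne m 0 with rfl | hm
  · have : n = 1 := Nat.coprime_zero_left n |>.mp h
    subst this; simp [hFun_zero, hFun_one]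
  rcases eq_or_ne n 0 with rfl | hn
  · have : m = 1 := Nat.coprime_zero_right m |>.mp h
    subst this; simp [hFun_zero, hFun_one]
  have key : (Squarefree (m * n) ∧ Odd (m * n)) ↔
      (Squarefree m ∧ Odd m) ∧ (Squarefree n ∧ Odd n) := by
    rw [Nat.squarefree_mul h, Nat.odd_mul]; tauto
  unfold hFun
  by_cases hc : (Squarefree m ∧ Odd m) ∧ (Squarefree n ∧ Odd n)
  · rw [if_pos (key.mpr hc), if_pos hc.1, if_pos hc.2,
      Nat.primeFactors_mul hm hn, Finset.prod_union h.disjoint_primeFactors]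
  · rw [if_neg (fun hx => hc (key.mp hx))]
    rcases Decidable.not_and_iff_or_not.mp hc with h' | h'
    · rw [if_neg h', zero_mul]
    · rw [if_neg h', mul_zero]

lemma gFun_one : gFun 1 = 1 := by simp [gFun]

lemma gFun_mul {m n : ℕ} (h : m.Coprime n) (hm : m ≠ 0) (hn : n ≠ 0) :
    gFun (m * n) = gFun m * gFun n := by
  unfold gFun
  rw [Nat.primeFactors_mul hm hn, Finset.filter_union,
    Finset.prod_union (Finset.disjoint_filter_filter h.disjoint_primeFactors)]

noncomputable def Hfn : ArithmeticFunction ℝ := ⟨hFun, hFun_zero⟩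

noncomputable def Gfn : ArithmeticFunction ℝ := ⟨fun n => if n = 0 then 0 else gFun n, by simp⟩

lemma Hfn_mult : Hfn.IsMultiplicative := by
  refine ⟨hFun_one, fun {m n} h => hFun_mul h⟩

lemma Gfn_mult : Gfn.IsMultiplicative := by
  refine ⟨by simp [Gfn, gFun_one], fun {m n} h => ?_⟩
  rcases eq_or_ne m 0 with rfl | hm
  · simp [Gfn]
  rcases eq_or_ne n 0 with rfl | hn
  · simp [Gfn]
  simp only [Gfn, ArithmeticFunction.coe_mk, if_neg (mul_ne_zero hm hn), if_neg hm, if_neg hn]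
  exact gFun_mul h hm hn

lemma hFun_prime_pow {p : ℕ} (hp : p.Prime) {k : ℕ} (hk : 2 ≤ k) : hFun (p ^ k) = 0 := by
  unfold hFun
  rw [if_neg]
  rintro ⟨hsq, -⟩
  have : p * p ∣ p ^ k := by
    have : p ^ 2 ∣ p ^ k := pow_dvd_pow p hk
    rwa [pow_two] at this
  exact hp.one_lt.ne' (Nat.isUnit_iff.mp (hsq p this))

lemma hFun_prime {p : ℕ} (hp : p.Prime) :
    hFun p = if 2 < p then 1 / ((p : ℝ) - 2) else 0 := by
  unfold hFun
  rw [hp.primeFactors]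
  by_cases h2 : 2 < p
  · have hodd : Odd p := hp.odd_of_ne_two (by omega)
    rw [if_pos ⟨hp.squarefree, hodd⟩, if_pos h2, Finset.prod_singleton]
  · have : p = 2 := by have := hp.two_le; omega
    subst this
    rw [if_neg (by simp [Nat.odd_iff]), if_neg h2]

lemma gFun_eq_sum (n : ℕ) (hn : n ≠ 0) : gFun n = ∑ d ∈ n.divisors, hFun d := by
  have hz : ((ArithmeticFunction.zeta : ArithmeticFunction ℕ) : ArithmeticFunction ℝ) * Hfn
      = Gfn := by
    rw [ArithmeticFunction.IsMultiplicative.eq_iff_eq_on_prime_powers _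
      (ArithmeticFunction.isMultiplicative_zeta.natCast.mul Hfn_mult) _ Gfn_mult]
    intro p i hp
    rw [ArithmeticFunction.coe_zeta_mul_apply, Nat.sum_divisors_prime_pow hp]
    rcases Nat.eq_zero_or_pos i with rfl | hi
    · simp [Hfn, hFun_one, Gfn, gFun_one]
    have hsum : ∑ k ∈ Finset.range (i + 1), Hfn (p ^ k) = hFun 1 + hFun p := by
      rw [show ∑ k ∈ Finset.range (i + 1), Hfn (p ^ k)
          = ∑ k ∈ ({0, 1} : Finset ℕ), Hfn (p ^ k) from (Finset.sum_subset
            (by intro x hx; simp at hx ⊢; omega)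
            (fun x hx hx' => by
              have : 2 ≤ x := by simp at hx hx'; omega
              exact hFun_prime_pow hp this)).symm]
      simp [Hfn]
    rw [hsum, hFun_one, hFun_prime hp]
    have hpi : p ^ i ≠ 0 := pow_ne_zero _ hp.pos.ne'
    simp only [Gfn, ArithmeticFunction.coe_mk, if_neg hpi]
    unfold gFun
    rw [Nat.primeFactors_prime_pow hi.ne' hp]
    by_cases h2 : 2 < p
    · rw [if_pos h2, Finset.filter_singleton, if_pos h2, Finset.prod_singleton]
      have hp2 : ((p:ℝ) - 2) ≠ 0 := by
        have : (3:ℝ) ≤ (p:ℝ) := by exact_mod_cast h2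
        linarith
      field_simp
      ring
    · rw [if_neg h2, Finset.filter_singleton, if_neg h2, Finset.prod_empty, add_zero]
  have := congrArg (fun f : ArithmeticFunction ℝ => f n) hz
  simp only [ArithmeticFunction.coe_zeta_mul_apply] at this
  rw [show Gfn n = gFun n from by simp [Gfn, hn]] at this
  rw [← this]
  rfl

lemma hFun_odd_of_ne_zero {d : ℕ} (h : hFun d ≠ 0) : Odd d := by
  by_contra hno
  exact h (by unfold hFun; rw [if_neg (fun hc => hno hc.2)])

lemma count_lemma {Y d : ℕ} (hd : Odd d) :
    (((Finset.Icc 1 Y).filter (fun n => 2 ∣ n)).filter (fun n => d ∣ n)).card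
      = Y / (2 * d) := by
  rw [Finset.filter_filter]
  have heq : ((Finset.Icc 1 Y).filter (fun n => 2 ∣ n ∧ d ∣ n))
      = (Finset.Icc 1 Y).filter (fun n => 2 * d ∣ n) := by
    apply Finset.filter_congr
    intro n _
    constructor
    · rintro ⟨h2, hdn⟩
      exact (Nat.coprime_two_left.mpr hd).mul_dvd_of_dvd_of_dvd h2 hdn
    · intro h
      exact ⟨dvd_trans (dvd_mul_right 2 d) h, dvd_trans (dvd_mul_left d 2) h⟩
  rw [heq, show Finset.Icc 1 Y = Finset.Ioc 0 Y from by rw [← Finset.Icc_add_one_left_eq_Ioc]; rfl]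
  exact Nat.Ioc_filter_dvd_card_eq_div Y (2 * d)

lemma sum_even_g (Y : ℕ) :
    ∑ n ∈ (Finset.Icc 1 Y).filter (fun n => 2 ∣ n), gFun n
      = ∑ d ∈ Finset.Icc 1 Y, hFun d * ((Y / (2 * d) : ℕ) : ℝ) := by
  have h1 : ∀ n ∈ (Finset.Icc 1 Y).filter (fun n => 2 ∣ n),
      gFun n = ∑ d ∈ Finset.Icc 1 Y, if d ∣ n then hFun d else 0 := by
    intro n hn
    simp only [Finset.mem_filter, Finset.mem_Icc] at hn
    rw [gFun_eq_sum n (by omega), ← Finset.sum_filter]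
    apply Finset.sum_congr _ (fun _ _ => rfl)
    ext d
    simp only [Nat.mem_divisors, Finset.mem_filter, Finset.mem_Icc]
    constructor
    · rintro ⟨hdn, hn0⟩
      exact ⟨⟨Nat.pos_of_dvd_of_pos hdn (by omega), le_trans (Nat.le_of_dvd (by omega) hdn) hn.1.2⟩, hdn⟩
    · rintro ⟨-, hdn⟩
      exact ⟨hdn, by omega⟩
  rw [Finset.sum_congr rfl h1, Finset.sum_comm]
  apply Finset.sum_congr rfl
  intro d _
  rw [← Finset.sum_filter, Finset.sum_const, nsmul_eq_mul]
  by_cases h0 : hFun d = 0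
  · simp [h0]
  · rw [count_lemma (hFun_odd_of_ne_zero h0), mul_comm]

noncomputable def fFun (d : ℕ) : ℝ := hFun d / d

lemma fFun_zero : fFun 0 = 0 := by simp [fFun, hFun_zero]

lemma fFun_one : fFun 1 = 1 := by simp [fFun, hFun_one]

lemma fFun_nonneg (d : ℕ) : 0 ≤ fFun d := div_nonneg (hFun_nonneg d) (Nat.cast_nonneg d)

lemma fFun_mul {m n : ℕ} (h : m.Coprime n) : fFun (m * n) = fFun m * fFun n := by
  unfold fFun
  rw [hFun_mul h, Nat.cast_mul, div_mul_div_comm]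

lemma fFun_prime {p : ℕ} (hp : p.Prime) :
    fFun p = if 2 < p then 1 / ((p : ℝ) * ((p : ℝ) - 2)) else 0 := by
  unfold fFun
  rw [hFun_prime hp]
  split_ifs with h2
  · rw [div_div, mul_comm]
  · simp

lemma fFun_pow_zero {p : ℕ} (hp : p.Prime) {e : ℕ} (he : e ∉ ({0, 1} : Finset ℕ)) :
    fFun (p ^ e) = 0 := by
  simp only [Finset.mem_insert, Finset.mem_singleton] at he
  have h2 : 2 ≤ e := by omega
  unfold fFun
  rw [hFun_prime_pow hp h2, zero_div]

lemma tsum_fFun_prime {p : ℕ} (hp : p.Prime) :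
    ∑' e : ℕ, fFun (p ^ e) = 1 + fFun p := by
  rw [tsum_eq_sum (s := ({0, 1} : Finset ℕ)) (fun e he => fFun_pow_zero hp he)]
  rw [Finset.sum_pair (by norm_num)]
  simp [fFun_one]

lemma fFun_prime_le {p : ℕ} (hp : p.Prime) : fFun p ≤ 3 * (1 / (p : ℝ) ^ 2) := by
  rw [fFun_prime hp]
  split_ifs with h2
  · have h3 : (3 : ℝ) ≤ (p : ℝ) := by exact_mod_cast h2
    rw [div_le_iff₀ (by nlinarith), mul_comm (3 : ℝ), mul_assoc, one_div,
      inv_mul_eq_div, le_div_iff₀ (by positivity)]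
    nlinarith
  · positivity

noncomputable def Bconst : ℝ := Real.exp (3 * ∑' k : ℕ, 1 / (k : ℝ) ^ 2)

lemma summable_inv_sq : Summable (fun k : ℕ => 1 / (k : ℝ) ^ 2) :=
  Real.summable_one_div_nat_pow.mpr one_lt_two

lemma prod_primesBelow_le (N : ℕ) :
    ∏ p ∈ N.primesBelow, (∑' e : ℕ, fFun (p ^ e)) ≤ Bconst := by
  calc ∏ p ∈ N.primesBelow, (∑' e : ℕ, fFun (p ^ e))
      = ∏ p ∈ N.primesBelow, (1 + fFun p) := by
        exact Finset.prod_congr rfl fun p hp =>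
          tsum_fFun_prime (Nat.prime_of_mem_primesBelow hp)
    _ ≤ ∏ p ∈ N.primesBelow, Real.exp (fFun p) := by
        refine Finset.prod_le_prod (fun p _ => by have := fFun_nonneg p; linarith) ?_
        intro p _
        have := Real.add_one_le_exp (fFun p)
        linarith
    _ = Real.exp (∑ p ∈ N.primesBelow, fFun p) := (Real.exp_sum _ _).symm
    _ ≤ Bconst := by
        rw [Bconst, Real.exp_le_exp]
        calc ∑ p ∈ N.primesBelow, fFun p
            ≤ ∑ p ∈ N.primesBelow, 3 * (1 / (p : ℝ) ^ 2) :=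
              Finset.sum_le_sum fun p hp => fFun_prime_le (Nat.prime_of_mem_primesBelow hp)
          _ ≤ ∑ k ∈ Finset.range N, 3 * (1 / (k : ℝ) ^ 2) := by
              refine Finset.sum_le_sum_of_subset_of_nonneg ?_ (fun k _ _ => by positivity)
              intro p hp
              exact Finset.mem_range.mpr (Nat.lt_of_mem_primesBelow hp)
          _ = 3 * ∑ k ∈ Finset.range N, 1 / (k : ℝ) ^ 2 := by rw [Finset.mul_sum]
          _ ≤ 3 * ∑' k : ℕ, 1 / (k : ℝ) ^ 2 := by
              have := Summable.sum_le_tsum (Finset.range N) (fun k _ => by positivity) summable_inv_sq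
              linarith

lemma summable_fFun_pow {p : ℕ} (hp : p.Prime) :
    Summable (fun e : ℕ => ‖fFun (p ^ e)‖) :=
  summable_of_ne_finset_zero (s := ({0, 1} : Finset ℕ))
    (fun e he => by rw [fFun_pow_zero hp he, norm_zero])

lemma summable_fFun : Summable fFun := by
  apply summable_of_sum_range_le fFun_nonneg
  intro N
  obtain ⟨hs1, hs2⟩ := EulerProduct.summable_and_hasSum_smoothNumbers_prod_primesBelow_tsum
    fFun_one (fun {m n} h => fFun_mul h) (fun {p} hp => summable_fFun_pow hp) N
  have hind : ∀ d ∈ Finset.range N, fFun d = Set.indicator (Nat.smoothNumbers N) fFun d := by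
    intro d hd
    rcases eq_or_ne d 0 with rfl | hd0
    · by_cases h : (0 : ℕ) ∈ Nat.smoothNumbers N
      · rw [Set.indicator_of_mem h]
      · rw [Set.indicator_of_notMem h, fFun_zero]
    · rw [Set.indicator_of_mem]
      refine Nat.mem_smoothNumbers.mpr ⟨hd0, fun p hp => ?_⟩
      have hpd : p ∣ d := Nat.dvd_of_mem_primeFactorsList hp
      exact lt_of_le_of_lt (Nat.le_of_dvd (Nat.pos_of_ne_zero hd0) hpd)
        (Finset.mem_range.mp hd)
  rw [Finset.sum_congr rfl hind]
  have hsummable_ind : Summable (Set.indicator (Nat.smoothNumbers N) fFun) := by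
    rw [← summable_subtype_iff_indicator]
    exact hs2.summable
  calc ∑ d ∈ Finset.range N, Set.indicator (Nat.smoothNumbers N) fFun d
      ≤ ∑' d : ℕ, Set.indicator (Nat.smoothNumbers N) fFun d :=
        Summable.sum_le_tsum _ (fun d _ => Set.indicator_nonneg (fun x _ => fFun_nonneg x) d)
          hsummable_ind
    _ = ∑' m : Nat.smoothNumbers N, fFun m := (_root_.tsum_subtype _ fFun).symm
    _ = ∏ p ∈ N.primesBelow, (∑' e : ℕ, fFun (p ^ e)) := hs2.tsum_eq
    _ ≤ Bconst := prod_primesBelow_le N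

lemma summable_norm_fFun : Summable (fun n => ‖fFun n‖) :=
  summable_fFun.congr fun n => (Real.norm_of_nonneg (fFun_nonneg n)).symm

lemma tendsto_prod_fFun :
    Tendsto (fun n : ℕ => ∏ p ∈ (Finset.range n).filter (fun p => p.Prime ∧ 2 < p),
      (1 + 1 / ((p : ℝ) * ((p : ℝ) - 2)))) Filter.atTop (nhds (∑' n, fFun n)) := by
  have h := EulerProduct.eulerProduct fFun_one (fun {m n} h => fFun_mul h)
    summable_norm_fFun fFun_zero
  refine h.congr fun n => ?_
  rw [show (Finset.range n).filter (fun p => p.Prime ∧ 2 < p)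
      = (Nat.primesBelow n).filter (fun p => 2 < p) from by
    rw [Nat.primesBelow, Finset.filter_filter]]
  rw [Finset.prod_filter]
  apply Finset.prod_congr rfl
  intro p hp
  have hp' := Nat.prime_of_mem_primesBelow hp
  rw [tsum_fFun_prime hp', fFun_prime hp']
  split_ifs <;> simp

lemma tendsto_nat_div_cast {m : ℕ} (hm : 1 ≤ m) :
    Tendsto (fun Y : ℕ => ((Y / m : ℕ) : ℝ) / (Y : ℝ)) atTop (nhds (1 / (m : ℝ))) := by
  have hm0 : (0 : ℝ) < (m : ℝ) := by exact_mod_cast hm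
  apply tendsto_of_tendsto_of_tendsto_of_le_of_le'
    (g := fun Y : ℕ => 1 / (m : ℝ) - 1 / (Y : ℝ)) (h := fun _ : ℕ => 1 / (m : ℝ))
  · have := tendsto_one_div_atTop_nhds_zero_nat (𝕜 := ℝ)
    have h2 : Tendsto (fun Y : ℕ => 1 / (m : ℝ) - 1 / (Y : ℝ)) atTop
        (nhds (1 / (m : ℝ) - 0)) := (tendsto_const_nhds).sub this
    simpa using h2
  · exact tendsto_const_nhds
  · filter_upwards [eventually_ge_atTop 1] with Y hY
    have hY0 : (0 : ℝ) < (Y : ℝ) := by exact_mod_cast hY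
    have hq : (Y : ℝ) / (m : ℝ) - 1 ≤ ((Y / m : ℕ) : ℝ) := by
      have h1 : Y < m * (Y / m) + m := by
        have h := Nat.div_add_mod Y m
        have h2 := Nat.mod_lt Y (show 0 < m by omega)
        omega
      have h1' : (Y : ℝ) < (m : ℝ) * ((Y / m : ℕ) : ℝ) + m := by exact_mod_cast h1
      rw [sub_le_iff_le_add, div_le_iff₀ hm0]
      nlinarith
    calc 1 / (m : ℝ) - 1 / (Y : ℝ) = ((Y : ℝ) / (m : ℝ) - 1) / (Y : ℝ) := by
          field_simp
        _ ≤ ((Y / m : ℕ) : ℝ) / (Y : ℝ) := by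
          exact div_le_div_of_nonneg_right hq hY0.le
  · filter_upwards [eventually_ge_atTop 1] with Y hY
    have hY0 : (0 : ℝ) < (Y : ℝ) := by exact_mod_cast hY
    calc ((Y / m : ℕ) : ℝ) / (Y : ℝ) ≤ ((Y : ℝ) / (m : ℝ)) / (Y : ℝ) :=
          div_le_div_of_nonneg_right Nat.cast_div_le hY0.le
      _ = 1 / (m : ℝ) := by field_simp

/-- `∑_{n ≤ Y, n even} g(n) = (½ ∏_{p > 2 prime} (1 + 1/(p(p-2))) + o(1)) Y` as `Y → ∞`,
where the infinite product over odd primes converges. -/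
theorem mean_value_g :
    ∃ C : ℝ,
      Filter.Tendsto (fun N : ℕ =>
          ∏ p ∈ (Finset.range N).filter (fun p => p.Prime ∧ 2 < p),
            (1 + 1 / ((p : ℝ) * ((p : ℝ) - 2))))
        Filter.atTop (nhds C) ∧
      Filter.Tendsto (fun Y : ℕ =>
          (∑ n ∈ (Finset.Icc 1 Y).filter (fun n => 2 ∣ n), gFun n) / Y)
        Filter.atTop (nhds (C / 2)) := by
  refine ⟨∑' n, fFun n, tendsto_prod_fFun, ?_⟩
  have key : ∀ Y : ℕ, (∑ n ∈ (Finset.Icc 1 Y).filter (fun n => 2 ∣ n), gFun n) / (Y : ℝ)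
      = ∑' d : ℕ, hFun d * ((Y / (2 * d) : ℕ) : ℝ) / (Y : ℝ) := by
    intro Y
    rw [sum_even_g, Finset.sum_div]
    refine (tsum_eq_sum ?_).symm
    intro d hd
    simp only [Finset.mem_Icc, not_and, not_le] at hd
    rcases eq_or_ne d 0 with rfl | hd0
    · rw [hFun_zero]; ring
    · have hdY : Y < 2 * d := by
        have := hd (Nat.one_le_iff_ne_zero.mpr hd0); omega
      rw [Nat.div_eq_of_lt hdY]; simp
  have h := tendsto_tsum_of_dominated_convergence (𝓕 := atTop)
    (f := fun (Y : ℕ) (d : ℕ) => hFun d * ((Y / (2 * d) : ℕ) : ℝ) / (Y : ℝ))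
    (g := fun d => fFun d / 2) (bound := fun d => fFun d / 2)
    (summable_fFun.div_const 2) ?_ ?_
  · have heq : ∑' d : ℕ, fFun d / 2 = (∑' n, fFun n) / 2 := tsum_div_const
    rw [← heq]
    exact Tendsto.congr (fun Y => (key Y).symm) h
  · intro d
    rcases eq_or_ne d 0 with rfl | hd0
    · simp only [hFun_zero, zero_mul, zero_div, fFun_zero]
      exact tendsto_const_nhds
    · have hm : 1 ≤ 2 * d := by omega
      have h2 := (tendsto_nat_div_cast hm).const_mul (hFun d)
      have hval : hFun d * (1 / ((2 * d : ℕ) : ℝ)) = fFun d / 2 := by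
        have hd0' : ((d : ℕ) : ℝ) ≠ 0 := Nat.cast_ne_zero.mpr hd0
        rw [fFun]
        push_cast
        rw [mul_one_div, div_div, mul_comm (d : ℝ) 2]
      rw [hval] at h2
      exact h2.congr fun Y => (mul_div_assoc _ _ _).symm
  · filter_upwards [eventually_ge_atTop 1] with Y hY
    intro d
    have hY0 : (0 : ℝ) < (Y : ℝ) := by exact_mod_cast hY
    rcases eq_or_ne d 0 with rfl | hd0
    · simp only [hFun_zero, zero_mul, zero_div, norm_zero, fFun_zero]
      norm_num
    · have h2d : (0 : ℝ) < ((2 * d : ℕ) : ℝ) := by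
        have : 1 ≤ 2 * d := by omega
        exact_mod_cast this
      have hnn : 0 ≤ hFun d * ((Y / (2 * d) : ℕ) : ℝ) / (Y : ℝ) := by
        apply div_nonneg (mul_nonneg (hFun_nonneg d) (Nat.cast_nonneg _)) hY0.le
      rw [Real.norm_of_nonneg hnn]
      calc hFun d * ((Y / (2 * d) : ℕ) : ℝ) / (Y : ℝ)
          ≤ hFun d * ((Y : ℝ) / ((2 * d : ℕ) : ℝ)) / (Y : ℝ) := by
            apply div_le_div_of_nonneg_right _ hY0.le
            exact mul_le_mul_of_nonneg_left Nat.cast_div_le (hFun_nonneg d)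
        _ = fFun d / 2 := by
            have hd0' : ((d : ℕ) : ℝ) ≠ 0 := Nat.cast_ne_zero.mpr hd0
            rw [fFun]
            push_cast
            calc hFun d * ((Y : ℝ) / (2 * (d : ℝ))) / (Y : ℝ)
                = hFun d * ((Y : ℝ) / (Y : ℝ)) / (2 * (d : ℝ)) := by ring
              _ = hFun d / (2 * (d : ℝ)) := by rw [div_self hY0.ne', mul_one]
              _ = hFun d / (d : ℝ) / 2 := by rw [div_div, mul_comm]
end

section
/- Let K be a finite Galois extension of ℚ, let α ∈ K be nonzero and not a root of unity, and let σ be an element of the Galois group Gal(K/ℚ). If k and ℓ are integers with α^k = σ(α)^ℓ, then k = ℓ or k = −ℓ. -/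
/-- If `K` is a finite Galois extension of `ℚ`, `α ∈ K` is nonzero and not a root of
unity, `σ ∈ Gal(K/ℚ)`, and `α^k = σ(α)^ℓ` for integers `k, ℓ`, then `k = ℓ` or `k = -ℓ`. -/
theorem mult_relation_conjugates (K : Type*) [Field K] [NumberField K] [IsGalois ℚ K]
    (α : K) (hα : α ≠ 0) (hroot : ∀ m : ℕ, 0 < m → α ^ m ≠ 1)
    (σ : K ≃ₐ[ℚ] K) (k l : ℤ) (h : α ^ k = (σ α) ^ l) :
    k = l ∨ k = -l := by
  -- integer version of "not a root of unity"
  have hz : ∀ m : ℤ, α ^ m = 1 → m = 0 := by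
    intro m hm
    rcases lt_trichotomy m 0 with hlt | heq | hgt
    · exfalso
      have : α ^ (-m).toNat = 1 := by
        rw [← zpow_natCast, Int.toNat_of_nonneg (by omega), zpow_neg, hm, inv_one]
      exact hroot (-m).toNat (by omega) this
    · exact heq
    · exfalso
      have : α ^ m.toNat = 1 := by
        rw [← zpow_natCast, Int.toNat_of_nonneg (by omega), hm]
      exact hroot m.toNat (by omega) this
  -- iterate σ
  have key : ∀ j : ℕ, α ^ (k ^ j) = ((σ ^ j) α) ^ (l ^ j) := by
    intro j
    induction j with
    | zero => simp
    | succ j ih =>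
      have hj : ((σ ^ j) α) ^ k = ((σ ^ (j + 1)) α) ^ l := by
        have := congrArg (σ ^ j) h
        rw [map_zpow₀, map_zpow₀] at this
        rw [this]
        congr 1
      calc α ^ (k ^ (j + 1)) = (α ^ (k ^ j)) ^ k := by rw [← zpow_mul, ← pow_succ]
        _ = (((σ ^ j) α) ^ (l ^ j)) ^ k := by rw [ih]
        _ = (((σ ^ j) α) ^ k) ^ (l ^ j) := by
            rw [← zpow_mul, ← zpow_mul, mul_comm]
        _ = (((σ ^ (j + 1)) α) ^ l) ^ (l ^ j) := by rw [hj]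
        _ = ((σ ^ (j + 1)) α) ^ (l ^ (j + 1)) := by
            rw [← zpow_mul, mul_comm, ← pow_succ]
  -- use the order of σ
  have hfin : IsOfFinOrder σ := isOfFinOrder_of_finite σ
  set n := orderOf σ with hn
  have hnpos : 0 < n := hfin.orderOf_pos
  have hσn : (σ ^ n) = 1 := pow_orderOf_eq_one σ
  have hkey := key n
  rw [hσn] at hkey
  simp only [AlgEquiv.one_apply] at hkey
  have : α ^ (k ^ n - l ^ n) = 1 := by
    rw [zpow_sub₀ hα, hkey, div_self (zpow_ne_zero _ hα)]
  have hkl : k ^ n = l ^ n := by have := hz _ this; omega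
  have habs : k.natAbs = l.natAbs := by
    have h1 : k.natAbs ^ n = l.natAbs ^ n := by
      have := congrArg Int.natAbs hkl
      simpa [Int.natAbs_pow] using this
    exact Nat.pow_left_injective (by omega) h1
  omega
end
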